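/- Let α > 1 and r ≥ 2 be real and integer parameters respectively, and let 1 ≤ i ≤ r be an integer. Then for all sufficiently large integers m, C(m+1, i) · (m/(m+1))^{i/α} - C(m, i) ≥ C(m-1, i-1) · (1 - 1/α - 1/(α(m-r+1))). -/

import Mathlib

/-- For α > 1, integers r ≥ 2 and 1 ≤ i ≤ r, for all sufficiently large m,
C(m+1,i)·(m/(m+1))^{i/α} − C(m,i) ≥ C(m−1,i−1)·(1 − 1/α − 1/(α(m−r+1))). -/
theorem binom_rpow_ineq (α : ℝ) (hα : 1 < α) (r i : ℕ) (hr : 2 ≤ r)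
    (hi1 : 1 ≤ i) (hir : i ≤ r) :
    ∃ m₀ : ℕ, ∀ m : ℕ, m₀ ≤ m →
      ((m + 1).choose i : ℝ) * ((m : ℝ) / ((m : ℝ) + 1)) ^ ((i : ℝ) / α)
          - (m.choose i : ℝ) ≥
        ((m - 1).choose (i - 1) : ℝ) * (1 - 1 / α - 1 / (α * ((m : ℝ) - (r : ℝ) + 1))) := by
  obtain ⟨j, rfl⟩ : ∃ j, i = j + 1 := ⟨i - 1, (Nat.succ_pred_eq_of_pos hi1).symm⟩
  have hα0 : (0:ℝ) < α := lt_trans one_pos hα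
  refine ⟨r + Nat.ceil (1/(α-1)) + 1, fun m hm => ?_⟩
  have hrm : r ≤ m := by omega
  have hceil : (1/(α-1) : ℝ) ≤ m := by
    calc (1/(α-1) : ℝ) ≤ Nat.ceil (1/(α-1)) := Nat.le_ceil _
    _ ≤ m := by exact_mod_cast Nat.le_of_lt (by omega)
  have hM2 : (2:ℝ) ≤ (m:ℝ) := by exact_mod_cast (by omega : 2 ≤ m)
  have hM0 : (0:ℝ) < (m:ℝ) := by linarith
  have hMr : (r:ℝ) ≤ (m:ℝ) := by exact_mod_cast hrm
  have hr1 : (1:ℝ) ≤ (r:ℝ) := by exact_mod_cast (by omega : 1 ≤ r)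
  have hαM : 1 ≤ (α - 1) * (m:ℝ) := by
    rw [div_le_iff₀ (by linarith : (0:ℝ) < α - 1)] at hceil
    linarith
  set M : ℝ := (m:ℝ) with hMdef
  set a : ℝ := (m.choose j : ℝ) with ha
  set b : ℝ := (m.choose (j+1) : ℝ) with hb
  set X : ℝ := ((m+1).choose (j+1) : ℝ) with hX
  have hP : X = a + b := by
    rw [hX, ha, hb, Nat.choose_succ_succ']; push_cast; ring
  have hmul : X * ((j:ℝ)+1) = (M+1) * a := by
    rw [hX, ha, hMdef]
    exact_mod_cast (Nat.add_one_mul_choose_eq m j).symm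
  have ha0 : 0 ≤ a := by rw [ha]; positivity
  have hX0 : 0 ≤ X := by rw [hX]; positivity
  -- rpow lower bound
  set t : ℝ := M / (M + 1) with htdef
  have ht0 : 0 < t := by rw [htdef]; positivity
  set β : ℝ := ((j:ℝ)+1)/α with hβdef
  have hβ : (0:ℝ) ≤ β := by rw [hβdef]; positivity
  have hlog : -(1/M) ≤ Real.log t := by
    have h2 : Real.log ((M+1)/M) ≤ (M+1)/M - 1 :=
      Real.log_le_sub_one_of_pos (by positivity)
    have h3 : Real.log t = - Real.log ((M+1)/M) := by
      rw [htdef, ← Real.log_inv, inv_div]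
    have h4 : (M+1)/M - 1 = 1/M := by field_simp; ring
    rw [h3]; linarith
  have hrpow : 1 - β / M ≤ t ^ β := by
    rw [Real.rpow_def_of_pos ht0]
    have h3 := Real.add_one_le_exp (Real.log t * β)
    have h4 : β * (-(1/M)) ≤ β * Real.log t := mul_le_mul_of_nonneg_left hlog hβ
    have h5 : β * (-(1/M)) = -(β/M) := by ring
    have h6 : Real.log t * β = β * Real.log t := mul_comm _ _
    linarith
  -- key identity
  have hkey : X * (1 - β / M) - b = a * (1 - 1/α - 1/(α*M)) := by
    rw [hβdef]
    have h1 : X * (1 - (((j:ℝ)+1)/α)/M) - b = X - b - (X*((j:ℝ)+1))/(α*M) := by ring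
    rw [h1, hmul, hP]
    field_simp
    ring
  -- main chain
  have hchoose : ((m - 1).choose j : ℝ) ≤ a := by
    rw [ha]; exact_mod_cast Nat.choose_le_choose j (Nat.sub_le m 1)
  have hc0 : (0:ℝ) ≤ ((m - 1).choose j : ℝ) := by positivity
  have hA0 : 0 ≤ 1 - 1/α - 1/(α*M) := by
    have he : (1 - 1/α) * (α*M) = (α-1)*M := by
      field_simp
    have : 1/(α*M) ≤ 1 - 1/α := by
      rw [div_le_iff₀ (by positivity : (0:ℝ) < α*M), he]
      linarith
    linarith
  have hMr1 : 0 < M - r + 1 := by linarith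
  have hBA : 1 - 1/α - 1/(α*(M - r + 1)) ≤ 1 - 1/α - 1/(α*M) := by
    have : 1/(α*M) ≤ 1/(α*(M - r + 1)) := by
      apply one_div_le_one_div_of_le (by positivity)
      have := mul_le_mul_of_nonneg_left (show M - (r:ℝ) + 1 ≤ M by linarith) (le_of_lt hα0)
      linarith
    linarith
  have step1 : ((m - 1).choose j : ℝ) * (1 - 1/α - 1/(α*(M - r + 1)))
      ≤ a * (1 - 1/α - 1/(α*M)) := by
    calc ((m - 1).choose j : ℝ) * (1 - 1/α - 1/(α*(M - r + 1)))
        ≤ ((m - 1).choose j : ℝ) * (1 - 1/α - 1/(α*M)) :=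
          mul_le_mul_of_nonneg_left hBA hc0
      _ ≤ a * (1 - 1/α - 1/(α*M)) := mul_le_mul_of_nonneg_right hchoose hA0
  have step2 : X * (1 - β / M) - b ≤ X * t ^ β - b := by
    have := mul_le_mul_of_nonneg_left hrpow hX0
    linarith
  have hsimp : (j + 1 - 1) = j := by omega
  rw [hsimp]
  push_cast
  rw [ge_iff_le]
  calc ((m - 1).choose j : ℝ) * (1 - 1/α - 1/(α*(M - r + 1)))
      ≤ a * (1 - 1/α - 1/(α*M)) := step1
    _ = X * (1 - β / M) - b := hkey.symm
    _ ≤ X * t ^ β - b := step2
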